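/- The rescaled Askey–Wilson Zhedanov coefficients are invariant under the partial inversion (a,b,c,d) ↦ (a,b,q/c,q/d): with ã = (q^{-1}abcd)^{1/2}, the five quantities C_1, ã^{-2}C_2, ã^{-1}D, ã^{-1}G_1, ã^{-2}G_2 (where C_1 = (q−q^{-1})², C_2 = q^{-1}(q−q^{-1})²e_4, D = (1−q^{-1})²(e_3+qe_1), G_1 = −q^{-3}(1−q)²(1+q)(e_4+qe_2+q²), G_2 = −q^{-3}(1−q)²(1+q)(e_1e_4+qe_3), e_i the elementary symmetric polynomials of a,b,c,d) are unchanged (up to the consistent choice of square root sign) when (c,d) is replaced by (q/c, q/d). -/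

import Mathlib

/-- Zhedanov coefficient `C₂` of the Askey–Wilson algebra. -/
noncomputable def awC2 (q a b c d : ℂ) : ℂ := q⁻¹ * (q - q⁻¹) ^ 2 * (a * b * c * d)

/-- Zhedanov coefficient `D` of the Askey–Wilson algebra. -/
noncomputable def awD (q a b c d : ℂ) : ℂ :=
  (1 - q⁻¹) ^ 2 * ((a * b * c + a * b * d + a * c * d + b * c * d) + q * (a + b + c + d))

/-- Zhedanov coefficient `G₁` of the Askey–Wilson algebra. -/
noncomputable def awG1 (q a b c d : ℂ) : ℂ :=
  -(q⁻¹ ^ 3) * (1 - q) ^ 2 * (1 + q) *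
    (a * b * c * d + q * (a * b + a * c + a * d + b * c + b * d + c * d) + q ^ 2)

/-- Zhedanov coefficient `G₂` of the Askey–Wilson algebra. -/
noncomputable def awG2 (q a b c d : ℂ) : ℂ :=
  -(q⁻¹ ^ 3) * (1 - q) ^ 2 * (1 + q) *
    ((a + b + c + d) * (a * b * c * d) + q * (a * b * c + a * b * d + a * c * d + b * c * d))

lemma aw_div_aux1 (X X' u c d q : ℂ) (hu : u ≠ 0) (hc : c ≠ 0) (hd : d ≠ 0) (hq : q ≠ 0)
    (key : X' * (c * d) = X * q) : X' / (q * u / (c * d)) = X / u := by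
  field_simp
  linear_combination key

lemma aw_div_aux2 (X X' u c d q : ℂ) (hu : u ≠ 0) (hc : c ≠ 0) (hd : d ≠ 0) (hq : q ≠ 0)
    (key : X' * (c * d) ^ 2 = X * q ^ 2) : X' / (q * u / (c * d)) ^ 2 = X / u ^ 2 := by
  field_simp
  linear_combination key

lemma aw_k1 (q a b c d : ℂ) (hc : c ≠ 0) (hd : d ≠ 0) :
    awG1 q a b (q/c) (q/d) * (c*d) = awG1 q a b c d * q := by
  have h : (q/c) * c = q := div_mul_cancel₀ q hc
  have h2 : (q/d) * d = q := div_mul_cancel₀ q hd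
  simp only [awG1]
  linear_combination (-(q⁻¹^3) * (1-q)^2 * (1+q)) *
    ((a*b*((q/d)*d) + q*(a+b)*d + q*((q/d)*d)) * h + (q*a*b + q*(a+b)*c + q^2) * h2)

lemma aw_k2 (q a b c d : ℂ) (hc : c ≠ 0) (hd : d ≠ 0) :
    awG2 q a b (q/c) (q/d) * (c*d)^2 = awG2 q a b c d * q^2 := by
  have h : (q/c) * c = q := div_mul_cancel₀ q hc
  have h2 : (q/d) * d = q := div_mul_cancel₀ q hd
  simp only [awG2]
  linear_combination (-(q⁻¹^3) * (1-q)^2 * (1+q)) *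
    (((a+b)*a*b*c*d*((q/d)*d) + a*b*d*((q/c)*c+q)*((q/d)*d) + a*b*c*((q/d)*d)^2
        + q*a*b*c*d^2 + q*(a+b)*c*d*((q/d)*d)) * h
     + (q*(a+b)*a*b*c*d + a*b*d*q^2 + a*b*c*q*((q/d)*d+q) + q*a*b*c^2*d
        + q^2*(a+b)*c*d) * h2)

/-- The rescaled Askey–Wilson Zhedanov coefficients `C₁, ã⁻²C₂, ã⁻¹D, ã⁻¹G₁, ã⁻²G₂`
are invariant under `(a,b,c,d) ↦ (a,b,q/c,q/d)`, up to a consistent choice of the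
square root `ã' = (q⁻¹·ab·(q/c)(q/d))^{1/2}` for the transformed parameters.
(`C₁ = (q−q⁻¹)²` does not depend on the parameters at all, hence is trivially unchanged.) -/
theorem stmt17 (q a b c d ta : ℂ)
    (hq : q ≠ 0) (ha : a ≠ 0) (hb : b ≠ 0) (hc : c ≠ 0) (hd : d ≠ 0)
    (hta : ta ^ 2 = q⁻¹ * (a * b * c * d)) (hta0 : ta ≠ 0) :
    ∃ ta' : ℂ, ta' ^ 2 = q⁻¹ * (a * b * (q / c) * (q / d)) ∧ ta' ≠ 0 ∧
      awC2 q a b (q / c) (q / d) / ta' ^ 2 = awC2 q a b c d / ta ^ 2 ∧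
      awD q a b (q / c) (q / d) / ta' = awD q a b c d / ta ∧
      awG1 q a b (q / c) (q / d) / ta' = awG1 q a b c d / ta ∧
      awG2 q a b (q / c) (q / d) / ta' ^ 2 = awG2 q a b c d / ta ^ 2 := by
  have hta2 : ta ^ 2 * q = a * b * c * d := by
    rw [hta]; field_simp
  refine ⟨q * ta / (c * d), ?_, div_ne_zero (mul_ne_zero hq hta0) (mul_ne_zero hc hd),
    aw_div_aux2 _ _ _ _ _ _ hta0 hc hd hq ?_,
    aw_div_aux1 _ _ _ _ _ _ hta0 hc hd hq ?_,
    aw_div_aux1 _ _ _ _ _ _ hta0 hc hd hq (aw_k1 q a b c d hc hd),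
    aw_div_aux2 _ _ _ _ _ _ hta0 hc hd hq (aw_k2 q a b c d hc hd)⟩
  · field_simp
    linear_combination hta2
  · simp only [awC2]; field_simp
  · simp only [awD]; field_simp; ring
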